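/- Let f be an irreducible Weierstrass polynomial of degree n with Puiseux characteristic (b₀,...,b_g), let f^{(k)} be a characteristic approximate root (degree b₀/l_k, contact cont(f, f^{(k)}) = b_{k+1}/b₀), and let γ be a Newton–Puiseux root of f. Then there is exactly one Newton–Puiseux root δ of f^{(k)} with O(δ, γ) ≥ b_{k+1}/b₀. -/

import Mathlib

noncomputable section

open Polynomial

/-- The contact `cont(A,B) = max { ord_x(α - β) : α ∈ A, β ∈ B }` between two nonempty
finite sets of fractional power series, valued in `WithTop ℚ`. -/
def contactSets (A B : Finset (HahnSeries ℚ ℂ)) (hA : A.Nonempty) (hB : B.Nonempty) :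
    WithTop ℚ :=
  (A ×ˢ B).sup' (hA.product hB) fun p => (p.1 - p.2).orderTop

namespace PuiseuxAux

/-- character -/
def mchar (m : ℤ) (r : ℚ) : ℂ := Complex.exp (((m : ℂ) * (r : ℂ)) * (2 * Real.pi * Complex.I))

lemma mchar_ne_zero (m : ℤ) (r : ℚ) : mchar m r ≠ 0 := Complex.exp_ne_zero _

lemma mchar_add (m : ℤ) (r s : ℚ) : mchar m (r + s) = mchar m r * mchar m s := by
  rw [mchar, mchar, mchar, ← Complex.exp_add]
  push_cast
  ring_nf

lemma mchar_zero (m : ℤ) : mchar m 0 = 1 := by simp [mchar]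

lemma mchar_natCast (m : ℤ) (n : ℕ) : mchar m (n : ℚ) = 1 := by
  have : ((m : ℂ) * ((n : ℚ) : ℂ)) = ((m * n : ℤ) : ℂ) := by push_cast; ring
  rw [mchar, this]
  exact Complex.exp_int_mul_two_pi_mul_I (m * n)

lemma mchar_eq_one (r : ℚ) (h : mchar 1 r = 1) : ∃ z : ℤ, (z : ℚ) = r := by
  rw [mchar, Complex.exp_eq_one_iff] at h
  obtain ⟨z, hz⟩ := h
  refine ⟨z, ?_⟩
  have h2 : (2 * (Real.pi : ℂ) * Complex.I) ≠ 0 := by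
    simp [Real.pi_ne_zero, Complex.I_ne_zero]
  have : ((r : ℂ)) = (z : ℂ) := by
    have := mul_right_cancel₀ h2 (by simpa using hz)
    simpa using this
  exact_mod_cast this.symm

/-- Coefficient rescaling: an automorphism of the Hahn series field that fixes
integer-exponent series. -/
def scale (m : ℤ) (x : HahnSeries ℚ ℂ) : HahnSeries ℚ ℂ where
  coeff := fun r => mchar m r * x.coeff r
  isPWO_support' := by
    have : (Function.support fun r => mchar m r * x.coeff r) = x.support := by
      ext r
      simp [Function.mem_support, mchar_ne_zero, HahnSeries.support]
    rw [this]
    exact x.isPWO_support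

@[simp] lemma scale_coeff (m : ℤ) (x : HahnSeries ℚ ℂ) (r : ℚ) :
    (scale m x).coeff r = mchar m r * x.coeff r := rfl

lemma scale_support (m : ℤ) (x : HahnSeries ℚ ℂ) : (scale m x).support = x.support := by
  ext r
  simp [HahnSeries.mem_support, mchar_ne_zero]

lemma scale_add (m : ℤ) (x y : HahnSeries ℚ ℂ) :
    scale m (x + y) = scale m x + scale m y := by
  ext r
  simp [mul_add]

lemma scale_one (m : ℤ) : scale m (1 : HahnSeries ℚ ℂ) = 1 := by
  ext r
  rcases eq_or_ne r 0 with rfl | hr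
  · simp [HahnSeries.coeff_one, mchar_zero]
  · simp [HahnSeries.coeff_one, hr]

lemma scale_mul (m : ℤ) (x y : HahnSeries ℚ ℂ) :
    scale m (x * y) = scale m x * scale m y := by
  ext a
  have hx : (scale m x).support = x.support := scale_support m x
  have hy : (scale m y).support = y.support := scale_support m y
  have hanti : Finset.antidiagonal (scale m x).isPWO_support (scale m y).isPWO_support a
      = Finset.antidiagonal x.isPWO_support y.isPWO_support a := by
    ext ij
    simp [Finset.mem_antidiagonal, hx, hy]
  rw [scale_coeff, HahnSeries.coeff_mul, HahnSeries.coeff_mul, hanti, Finset.mul_sum]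
  apply Finset.sum_congr rfl
  intro ij hij
  rw [Finset.mem_antidiagonal] at hij
  rw [scale_coeff, scale_coeff, ← hij.2.2, mchar_add]
  ring

/-- `scale` as a ring homomorphism. -/
def scaleHom (m : ℤ) : HahnSeries ℚ ℂ →+* HahnSeries ℚ ℂ where
  toFun := scale m
  map_one' := scale_one m
  map_mul' := scale_mul m
  map_zero' := by ext r; simp
  map_add' := scale_add m

@[simp] lemma scaleHom_apply (m : ℤ) (x : HahnSeries ℚ ℂ) : scaleHom m x = scale m x := rfl

lemma scale_scale (m m' : ℤ) (x : HahnSeries ℚ ℂ) :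
    scale m (scale m' x) = scale (m + m') x := by
  ext r
  rw [scale_coeff, scale_coeff, scale_coeff, ← mul_assoc]
  congr 1
  rw [mchar, mchar, mchar, ← Complex.exp_add]
  push_cast
  ring_nf

lemma scale_zero_apply (x : HahnSeries ℚ ℂ) : scale 0 x = x := by
  ext r
  simp [mchar]

lemma scale_ofPowerSeries (m : ℤ) (p : PowerSeries ℂ) :
    scale m (HahnSeries.ofPowerSeries ℚ ℂ p) = HahnSeries.ofPowerSeries ℚ ℂ p := by
  ext r
  by_cases hr : ∃ n : ℕ, (n : ℚ) = r
  · obtain ⟨n, rfl⟩ := hr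
    rw [scale_coeff, mchar_natCast, one_mul]
  · have h0 : (HahnSeries.ofPowerSeries ℚ ℂ p).coeff r = 0 := by
      rw [HahnSeries.ofPowerSeries_apply]
      refine HahnSeries.embDomain_notin_range ?_
      rintro ⟨n, hn⟩
      exact hr ⟨n, hn⟩
    rw [scale_coeff, h0, mul_zero]

lemma scaleHom_comp_ofPowerSeries (m : ℤ) :
    (scaleHom m).comp (HahnSeries.ofPowerSeries ℚ ℂ) = HahnSeries.ofPowerSeries ℚ ℂ :=
  RingHom.ext fun p => scale_ofPowerSeries m p

lemma scale_eval₂ (m : ℤ) (p : Polynomial (PowerSeries ℂ)) (γ : HahnSeries ℚ ℂ) :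
    scale m (Polynomial.eval₂ (HahnSeries.ofPowerSeries ℚ ℂ) γ p)
      = Polynomial.eval₂ (HahnSeries.ofPowerSeries ℚ ℂ) (scale m γ) p := by
  have := Polynomial.hom_eval₂ p (HahnSeries.ofPowerSeries ℚ ℂ) (scaleHom m) γ
  rw [scaleHom_comp_ofPowerSeries] at this
  simpa using this

lemma orderTop_le_scale (m : ℤ) (x : HahnSeries ℚ ℂ) : x.orderTop ≤ (scale m x).orderTop := by
  by_cases h : scale m x = 0
  · have hx : x = 0 := by
      ext r
      have := congrArg (fun y => HahnSeries.coeff y r) h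
      simp only [scale_coeff, HahnSeries.coeff_zero] at this
      exact (mul_eq_zero.mp this).resolve_left (mchar_ne_zero m r)
    rw [hx] at h ⊢
    rw [h]
  · obtain ⟨g, hg⟩ := WithTop.ne_top_iff_exists.mp (HahnSeries.orderTop_ne_top.mpr h)
    have hc : (scale m x).coeff g ≠ 0 := HahnSeries.coeff_orderTop_ne hg.symm
    have hxc : x.coeff g ≠ 0 := by
      intro h0
      exact hc (by rw [scale_coeff, h0, mul_zero])
    calc x.orderTop ≤ (g : WithTop ℚ) := HahnSeries.orderTop_le_of_coeff_ne_zero hxc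
      _ = (scale m x).orderTop := hg

lemma scale_orderTop (m : ℤ) (x : HahnSeries ℚ ℂ) : (scale m x).orderTop = x.orderTop := by
  refine le_antisymm ?_ (orderTop_le_scale m x)
  have := orderTop_le_scale (-m) (scale m x)
  rwa [scale_scale, neg_add_cancel, scale_zero_apply] at this

lemma le_orderTop_of_forall {x : HahnSeries ℚ ℂ} {c : ℚ} (h : ∀ r, x.coeff r ≠ 0 → c ≤ r) :
    (c : WithTop ℚ) ≤ x.orderTop := by
  by_contra hc
  push_neg at hc
  have hne : x ≠ 0 := by
    intro h0
    rw [h0, HahnSeries.orderTop_zero] at hc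
    simp at hc
  obtain ⟨g, hg⟩ := WithTop.ne_top_iff_exists.mp (HahnSeries.orderTop_ne_top.mpr hne)
  have hcoeff := HahnSeries.coeff_orderTop_ne hg.symm
  have hle := h g hcoeff
  rw [← hg] at hc
  exact absurd hle (not_le.mpr (WithTop.coe_lt_coe.mp hc))

lemma ofPowerSeries_coeff_ne_zero {p : PowerSeries ℂ} {r : ℚ}
    (h : (HahnSeries.ofPowerSeries ℚ ℂ p).coeff r ≠ 0) : ∃ n : ℕ, (n : ℚ) = r := by
  by_contra hr
  push_neg at hr
  apply h
  rw [HahnSeries.ofPowerSeries_apply]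
  refine HahnSeries.embDomain_notin_range ?_
  rintro ⟨n, hn⟩
  exact hr n hn

lemma orderTop_ofPowerSeries_nonneg (p : PowerSeries ℂ) :
    (0 : WithTop ℚ) ≤ (HahnSeries.ofPowerSeries ℚ ℂ p).orderTop := by
  have : ((0 : ℚ) : WithTop ℚ) ≤ (HahnSeries.ofPowerSeries ℚ ℂ p).orderTop := by
    apply le_orderTop_of_forall
    intro r hr
    obtain ⟨n, rfl⟩ := ofPowerSeries_coeff_ne_zero hr
    exact_mod_cast Nat.zero_le n
  exact_mod_cast this

lemma le_orderTop_sum {ι : Type*} (s : Finset ι) (F : ι → HahnSeries ℚ ℂ) (c : WithTop ℚ)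
    (h : ∀ i ∈ s, c ≤ (F i).orderTop) : c ≤ (∑ i ∈ s, F i).orderTop := by
  classical
  induction s using Finset.cons_induction with
  | empty => simp [HahnSeries.orderTop_zero]
  | cons i s his ih =>
    rw [Finset.sum_cons]
    refine le_trans ?_ HahnSeries.min_orderTop_le_orderTop_add
    exact le_min (h i (Finset.mem_cons_self i s))
      (ih fun j hj => h j (Finset.mem_cons_of_mem hj))

lemma root_orderTop_nonneg {p : Polynomial (PowerSeries ℂ)} (hm : p.Monic)
    (hd : 1 ≤ p.natDegree) {γ : HahnSeries ℚ ℂ}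
    (hγ : Polynomial.eval₂ (HahnSeries.ofPowerSeries ℚ ℂ) γ p = 0) :
    (0 : WithTop ℚ) ≤ γ.orderTop := by
  by_cases h0 : γ = 0
  · simp [h0]
  set N := p.natDegree with hN
  set r := γ.order with hr
  suffices hrpos : 0 ≤ r by
    rw [← HahnSeries.order_eq_orderTop_of_ne_zero h0]
    exact_mod_cast hrpos
  by_contra hneg
  push_neg at hneg
  have key : γ ^ N = -∑ i ∈ Finset.range N, (HahnSeries.ofPowerSeries ℚ ℂ) (p.coeff i) * γ ^ i := by
    have hsum := Polynomial.eval₂_eq_sum_range (HahnSeries.ofPowerSeries ℚ ℂ) γ (p := p)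
    rw [hγ] at *
    rw [Finset.sum_range_succ, hm.coeff_natDegree, map_one, one_mul] at hsum
    exact eq_neg_of_add_eq_zero_right hsum.symm
  have hto : (γ ^ N).orderTop = (((N : ℚ) * r : ℚ) : WithTop ℚ) := by
    have hne : γ ^ N ≠ 0 := pow_ne_zero _ h0
    rw [← HahnSeries.order_eq_orderTop_of_ne_zero hne, HahnSeries.order_pow]
    norm_cast
  have hbound : (((N - 1 : ℕ) : ℚ) * r : ℚ) ≤ (γ ^ N).orderTop := by
    rw [key, HahnSeries.orderTop_neg]
    apply le_orderTop_sum
    intro i hi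
    rw [Finset.mem_range] at hi
    have h1 : (HahnSeries.ofPowerSeries ℚ ℂ (p.coeff i)).orderTop + (γ ^ i).orderTop
        ≤ (HahnSeries.ofPowerSeries ℚ ℂ (p.coeff i) * γ ^ i).orderTop :=
      (HahnSeries.orderTop_mul _ _).ge
    have h2 : (((i : ℚ) * r : ℚ) : WithTop ℚ) = (γ ^ i).orderTop := by
      have hne : γ ^ i ≠ 0 := pow_ne_zero _ h0
      rw [← HahnSeries.order_eq_orderTop_of_ne_zero hne, HahnSeries.order_pow]
      norm_cast
    have h3 : (((N - 1 : ℕ) : ℚ) * r : ℚ) ≤ (i : ℚ) * r := by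
      apply mul_le_mul_of_nonpos_right _ (le_of_lt hneg)
      have : (i : ℚ) ≤ ((N - 1 : ℕ) : ℚ) := by
        exact_mod_cast Nat.le_sub_one_of_lt hi
      exact this
    calc (((N - 1 : ℕ) : ℚ) * r : ℚ) ≤ (((i : ℚ) * r : ℚ) : WithTop ℚ) := by exact_mod_cast h3
      _ = (γ ^ i).orderTop := h2
      _ = 0 + (γ ^ i).orderTop := by rw [zero_add]
      _ ≤ (HahnSeries.ofPowerSeries ℚ ℂ (p.coeff i)).orderTop + (γ ^ i).orderTop := by
          exact add_le_add_left (orderTop_ofPowerSeries_nonneg _) _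
      _ ≤ _ := h1
  rw [hto] at hbound
  have hbound' : ((N - 1 : ℕ) : ℚ) * r ≤ (N : ℚ) * r := by exact_mod_cast hbound
  have hcast : ((N - 1 : ℕ) : ℚ) = (N : ℚ) - 1 := by
    have : (1:ℕ) ≤ N := hd
    push_cast [Nat.cast_sub this]
    ring
  rw [hcast] at hbound'
  nlinarith

/-- The subring of Hahn series supported in nonnegative exponents. -/
def nonnegSupport : Subring (HahnSeries ℚ ℂ) where
  carrier := {x | ∀ r ∈ x.support, (0 : ℚ) ≤ r}
  zero_mem' := by intro r hr; simp [HahnSeries.support_zero] at hr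
  one_mem' := by
    intro r hr
    rw [HahnSeries.support_one] at hr
    simp at hr
    simp [hr]
  add_mem' := by
    intro x y hx hy r hr
    rcases HahnSeries.support_add_subset x y hr with h | h
    · exact hx r h
    · exact hy r h
  neg_mem' := by
    intro x hx r hr
    rw [HahnSeries.support_neg] at hr
    exact hx r hr
  mul_mem' := by
    intro x y hx hy r hr
    obtain ⟨a, ha, c, hc, rfl⟩ := HahnSeries.support_mul_subset hr
    exact add_nonneg (hx a ha) (hy c hc)

lemma mem_nonnegSupport {x : HahnSeries ℚ ℂ} :
    x ∈ nonnegSupport ↔ ∀ r ∈ x.support, (0 : ℚ) ≤ r := Iff.rfl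

lemma coeff_prod_mem (S : Subring (HahnSeries ℚ ℂ)) (s : Finset (HahnSeries ℚ ℂ))
    (hs : ∀ δ ∈ s, δ ∈ S) (j : ℕ) :
    (∏ δ ∈ s, (Polynomial.X - Polynomial.C δ)).coeff j ∈ S := by
  classical
  have : ∀ q ∈ Multiset.map (fun δ => Polynomial.X - Polynomial.C δ) s.val, True := fun _ _ => trivial
  revert j
  have main : ∀ j, (∏ δ ∈ s, (Polynomial.X - Polynomial.C δ)).coeff j ∈ S := by
    refine Finset.prod_induction (fun δ => Polynomial.X - Polynomial.C δ)
      (fun q : Polynomial (HahnSeries ℚ ℂ) => ∀ j, q.coeff j ∈ S) ?_ ?_ ?_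
    · intro a b ha hb j
      rw [Polynomial.coeff_mul]
      exact Subring.sum_mem S fun ij _ => S.mul_mem (ha ij.1) (hb ij.2)
    · intro j
      rw [Polynomial.coeff_one]
      split_ifs
      · exact S.one_mem
      · exact S.zero_mem
    · intro δ hδ j
      rw [Polynomial.coeff_sub, Polynomial.coeff_X, Polynomial.coeff_C]
      refine S.sub_mem ?_ ?_
      · split_ifs
        · exact S.one_mem
        · exact S.zero_mem
      · split_ifs
        · exact hs δ hδ
        · exact S.zero_mem
  exact main

/-- Pull a Hahn series with natural support back to a power series. -/
def toPS (a : HahnSeries ℚ ℂ) : PowerSeries ℂ := PowerSeries.mk fun n => a.coeff n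

lemma ofPowerSeries_toPS {a : HahnSeries ℚ ℂ}
    (h : ∀ r, a.coeff r ≠ 0 → ∃ n : ℕ, (n : ℚ) = r) :
    HahnSeries.ofPowerSeries ℚ ℂ (toPS a) = a := by
  ext r
  by_cases hr : ∃ n : ℕ, (n : ℚ) = r
  · obtain ⟨n, rfl⟩ := hr
    rw [HahnSeries.ofPowerSeries_apply_coeff]
    simp [toPS]
  · have h1 : (HahnSeries.ofPowerSeries ℚ ℂ (toPS a)).coeff r = 0 := by
      by_contra hne
      exact hr (ofPowerSeries_coeff_ne_zero hne)
    have h2 : a.coeff r = 0 := by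
      by_contra hne
      exact hr (h r hne)
    rw [h1, h2]

end PuiseuxAux

set_option maxHeartbeats 2000000 in
/-- Let `f` be an irreducible Weierstrass polynomial of degree `n = b₀` with Puiseux
characteristic `(b₀,...,b_g)`, and let `f^{(k)}` be a characteristic approximate root of
`f`: an irreducible Weierstrass polynomial of degree `b₀/l_k` with
`cont(f, f^{(k)}) = b_{k+1}/b₀`, all of whose pairwise root contacts lie among
`b₁/b₀, ..., b_k/b₀`.  Then for any Newton–Puiseux root `γ` of `f` there is exactly one
Newton–Puiseux root `δ` of `f^{(k)}` with `O(δ, γ) ≥ b_{k+1}/b₀`. -/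
theorem unique_root_of_approximate_root_with_high_contact
    (n g k : ℕ) (hn : 0 < n) (hg : 1 ≤ g) (hk : k < g)
    (b l : ℕ → ℕ)
    (hb0 : b 0 = n)
    (hbmono : ∀ m, m < g → b m < b (m + 1))
    (hl0 : l 0 = n)
    (hl : ∀ m, m < g → l (m + 1) = Nat.gcd (l m) (b (m + 1)))
    (hlg : l g = 1)
    (f fk : Polynomial (PowerSeries ℂ))
    (hfmonic : f.Monic) (hfdeg : f.natDegree = n)
    (hfW : ∀ j, j < n → PowerSeries.constantCoeff (f.coeff j) = 0)
    (hfirr : Irreducible f)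
    (hfkmonic : fk.Monic) (hfkdeg : fk.natDegree = b 0 / l k)
    (hfkW : ∀ j, j < b 0 / l k → PowerSeries.constantCoeff (fk.coeff j) = 0)
    (hfkirr : Irreducible fk)
    (Zf Zk : Finset (HahnSeries ℚ ℂ))
    (hZf : ∀ γ, γ ∈ Zf ↔ Polynomial.eval₂ (HahnSeries.ofPowerSeries ℚ ℂ) γ f = 0)
    (hZk : ∀ δ, δ ∈ Zk ↔ Polynomial.eval₂ (HahnSeries.ofPowerSeries ℚ ℂ) δ fk = 0)
    (hnef : Zf.Nonempty) (hnek : Zk.Nonempty)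
    -- `cont(f, f^{(k)}) = b_{k+1}/b₀` :
    (hcont : contactSets Zf Zk hnef hnek = ((b (k + 1) : ℚ) / (b 0 : ℚ) : ℚ))
    -- pairwise contacts between the roots of `f^{(k)}` are among `b₁/b₀,...,b_k/b₀` :
    (hZkpair : ∀ δ₁ ∈ Zk, ∀ δ₂ ∈ Zk, δ₁ ≠ δ₂ →
      ∃ i, 1 ≤ i ∧ i ≤ k ∧ (δ₁ - δ₂).orderTop = ((b i : ℚ) / (b 0 : ℚ) : ℚ)) :
    ∀ γ ∈ Zf, ∃! δ, δ ∈ Zk ∧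
      ((b (k + 1) : ℚ) / (b 0 : ℚ) : WithTop ℚ) ≤ (δ - γ).orderTop := by

  classical
  intro γ hγ
  -- attain the sup defining the contact
  obtain ⟨p₀, hp₀mem, hp₀⟩ := Finset.exists_mem_eq_sup' (hnef.product hnek)
    (fun p : HahnSeries ℚ ℂ × HahnSeries ℚ ℂ => (p.1 - p.2).orderTop)
  rw [Finset.mem_product] at hp₀mem
  set q : ℚ := (b (k + 1) : ℚ) / (b 0 : ℚ) with hqdef
  set γ₀ := p₀.1 with hγ₀def
  set δ₀ := p₀.2 with hδ₀def
  have hq0 : (γ₀ - δ₀).orderTop = (q : WithTop ℚ) := by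
    unfold contactSets at hcont
    rw [hp₀] at hcont
    exact hcont
  have hscaleZf : ∀ (m : ℤ) x, x ∈ Zf → PuiseuxAux.scale m x ∈ Zf := by
    intro m x hx
    rw [hZf] at hx ⊢
    rw [← PuiseuxAux.scale_eval₂, hx]
    exact map_zero (PuiseuxAux.scaleHom m)
  have hscaleZk : ∀ (m : ℤ) x, x ∈ Zk → PuiseuxAux.scale m x ∈ Zk := by
    intro m x hx
    rw [hZk] at hx ⊢
    rw [← PuiseuxAux.scale_eval₂, hx]
    exact map_zero (PuiseuxAux.scaleHom m)
  have hinj1 : Function.Injective (PuiseuxAux.scale 1) := by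
    intro x y hxy
    have h := congrArg (PuiseuxAux.scale (-1)) hxy
    rwa [PuiseuxAux.scale_scale, PuiseuxAux.scale_scale, neg_add_cancel,
      PuiseuxAux.scale_zero_apply, PuiseuxAux.scale_zero_apply] at h
  set Orb : Finset (HahnSeries ℚ ℂ) :=
    Zf.filter (fun x => ∃ m : ℤ, PuiseuxAux.scale m γ₀ = x) with hOrbdef
  have hOrbZf : Orb ⊆ Zf := Finset.filter_subset _ _
  have hγ₀Orb : γ₀ ∈ Orb :=
    Finset.mem_filter.mpr ⟨hp₀mem.1, 0, PuiseuxAux.scale_zero_apply γ₀⟩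
  have hOrbscale : ∀ x ∈ Orb, PuiseuxAux.scale 1 x ∈ Orb := by
    intro x hx
    obtain ⟨hxZf, m, hm⟩ := Finset.mem_filter.mp hx
    refine Finset.mem_filter.mpr ⟨hscaleZf 1 x hxZf, 1 + m, ?_⟩
    rw [← PuiseuxAux.scale_scale, hm]
  have himg : Orb.image (PuiseuxAux.scale 1) = Orb := by
    apply Finset.eq_of_subset_of_card_le
    · intro y hy
      obtain ⟨x, hx, rfl⟩ := Finset.mem_image.mp hy
      exact hOrbscale x hx
    · rw [Finset.card_image_of_injective _ hinj1]
  set gpoly : Polynomial (HahnSeries ℚ ℂ) := ∏ δ ∈ Orb, (X - C δ) with hgdef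
  have hgmonic : gpoly.Monic :=
    Polynomial.monic_prod_of_monic _ _ fun δ _ => Polynomial.monic_X_sub_C δ
  have hmapg : gpoly.map (PuiseuxAux.scaleHom 1) = gpoly := by
    rw [hgdef, Polynomial.map_prod]
    simp only [Polynomial.map_sub, Polynomial.map_X, Polynomial.map_C,
      PuiseuxAux.scaleHom_apply]
    have h1 : ∏ δ ∈ Orb, (X - C (PuiseuxAux.scale 1 δ))
        = ∏ y ∈ Orb.image (PuiseuxAux.scale 1), (X - C y) :=
      (Finset.prod_image (s := Orb) (g := PuiseuxAux.scale 1)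
        (f := fun y : HahnSeries ℚ ℂ => X - C y) (fun x _ y _ h => hinj1 h)).symm
    rw [h1, himg]
  have hginv : ∀ j, PuiseuxAux.scale 1 (gpoly.coeff j) = gpoly.coeff j := by
    intro j
    have h := congrArg (fun p : Polynomial (HahnSeries ℚ ℂ) => p.coeff j) hmapg
    simpa [Polynomial.coeff_map] using h
  have hOrbnonneg : ∀ δ ∈ Orb, δ ∈ PuiseuxAux.nonnegSupport := by
    intro δ hδ
    have hroot := (hZf δ).mp (hOrbZf hδ)
    have hord : (0 : WithTop ℚ) ≤ δ.orderTop :=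
      PuiseuxAux.root_orderTop_nonneg hfmonic (by rw [hfdeg]; exact hn) hroot
    rw [PuiseuxAux.mem_nonnegSupport]
    intro r hr
    have hr' : δ.coeff r ≠ 0 := hr
    have h1 : δ.orderTop ≤ (r : WithTop ℚ) := HahnSeries.orderTop_le_of_coeff_ne_zero hr'
    have h2 : ((0 : ℚ) : WithTop ℚ) ≤ (r : WithTop ℚ) := by
      refine le_trans ?_ h1
      exact_mod_cast hord
    exact_mod_cast h2
  have hgcoeffN : ∀ j r, (gpoly.coeff j).coeff r ≠ 0 → ∃ n : ℕ, (n : ℚ) = r := by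
    intro j r hr
    have h1 : PuiseuxAux.mchar 1 r * (gpoly.coeff j).coeff r = (gpoly.coeff j).coeff r := by
      have h := congrArg (fun y : HahnSeries ℚ ℂ => y.coeff r) (hginv j)
      simpa using h
    have h2 : PuiseuxAux.mchar 1 r = 1 :=
      mul_right_cancel₀ hr (h1.trans (one_mul _).symm)
    obtain ⟨z, hz⟩ := PuiseuxAux.mchar_eq_one r h2
    have h3 : gpoly.coeff j ∈ PuiseuxAux.nonnegSupport := by
      rw [hgdef]
      exact PuiseuxAux.coeff_prod_mem _ _ hOrbnonneg j
    rw [PuiseuxAux.mem_nonnegSupport] at h3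
    have h4 : (0 : ℚ) ≤ r := h3 r hr
    rw [← hz] at h4 ⊢
    have h5 : 0 ≤ z := by exact_mod_cast h4
    exact ⟨z.toNat, by exact_mod_cast congrArg (fun t : ℤ => (t : ℚ)) (Int.toNat_of_nonneg h5)⟩
  set G : Polynomial (PowerSeries ℂ) :=
    gpoly.sum fun n a => Polynomial.C (PuiseuxAux.toPS a) * Polynomial.X ^ n with hGdef
  have hGmap : G.map (HahnSeries.ofPowerSeries ℚ ℂ) = gpoly := by
    rw [hGdef, Polynomial.sum_def, Polynomial.map_sum]
    have h1 : ∀ n ∈ gpoly.support,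
        (Polynomial.C (PuiseuxAux.toPS (gpoly.coeff n)) * Polynomial.X ^ n).map
          (HahnSeries.ofPowerSeries ℚ ℂ) = Polynomial.C (gpoly.coeff n) * Polynomial.X ^ n := by
      intro n _
      rw [Polynomial.map_mul, Polynomial.map_pow, Polynomial.map_C, Polynomial.map_X,
        PuiseuxAux.ofPowerSeries_toPS (fun r hr => hgcoeffN n r hr)]
    rw [Finset.sum_congr rfl h1]
    conv_rhs => rw [Polynomial.as_sum_support gpoly]
    exact Finset.sum_congr rfl fun n _ => Polynomial.C_mul_X_pow_eq_monomial
  have hGmonic : G.Monic :=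
    Polynomial.monic_of_injective (HahnSeries.ofPowerSeries_injective) (by rw [hGmap]; exact hgmonic)
  have hGnatdeg : G.natDegree = gpoly.natDegree := by
    conv_rhs => rw [← hGmap]
    exact (hGmonic.natDegree_map _).symm
  have hgdeg : gpoly.natDegree = Orb.card := by
    rw [hgdef, Polynomial.natDegree_prod_of_monic _ _ (fun δ _ => Polynomial.monic_X_sub_C δ)]
    simp
  have hGdegpos : 1 ≤ G.natDegree := by
    rw [hGnatdeg, hgdeg]
    exact Finset.card_pos.mpr ⟨γ₀, hγ₀Orb⟩
  have hfmapne : f.map (HahnSeries.ofPowerSeries ℚ ℂ) ≠ 0 :=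
    (hfmonic.map (HahnSeries.ofPowerSeries ℚ ℂ)).ne_zero
  have hOrbroots : Orb.val ≤ (f.map (HahnSeries.ofPowerSeries ℚ ℂ)).roots := by
    refine Multiset.le_iff_count.mpr fun a => ?_
    by_cases ha : a ∈ Orb
    · have h1 : Orb.val.count a = 1 := Multiset.nodup_iff_count_eq_one.mp Orb.nodup a ha
      rw [h1, Polynomial.count_roots]
      refine (Polynomial.rootMultiplicity_pos hfmapne).mpr ?_
      rw [Polynomial.IsRoot, Polynomial.eval_map]
      exact (hZf a).mp (hOrbZf ha)
    · rw [Multiset.count_eq_zero_of_notMem (fun h => ha h)]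
      exact Nat.zero_le _
  have hgdvd : gpoly ∣ f.map (HahnSeries.ofPowerSeries ℚ ℂ) := by
    have h := (Multiset.prod_X_sub_C_dvd_iff_le_roots hfmapne Orb.val).mpr hOrbroots
    rw [hgdef, Finset.prod_eq_multiset_prod]
    simpa using h
  have hGdvd : G ∣ f := by
    have hmod : (f %ₘ G).map (HahnSeries.ofPowerSeries ℚ ℂ) = 0 := by
      rw [Polynomial.map_modByMonic _ hGmonic, hGmap]
      exact (Polynomial.modByMonic_eq_zero_iff_dvd hgmonic).mpr hgdvd
    have hinj := Polynomial.map_injective _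
      (HahnSeries.ofPowerSeries_injective (Γ := ℚ) (R := ℂ))
    have h0 : f %ₘ G = 0 := hinj (by rw [hmod, Polynomial.map_zero])
    exact (Polynomial.modByMonic_eq_zero_iff_dvd hGmonic).mp h0
  obtain ⟨H, hH⟩ := hGdvd
  have hHunit : IsUnit H := by
    rcases hfirr.isUnit_or_isUnit hH with h | h
    · exfalso
      have := Polynomial.natDegree_eq_zero_of_isUnit h
      omega
    · exact h
  have hγOrb : γ ∈ Orb := by
    have hroot : Polynomial.eval γ (f.map (HahnSeries.ofPowerSeries ℚ ℂ)) = 0 := by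
      rw [Polynomial.eval_map]
      exact (hZf γ).mp hγ
    have heval : Polynomial.eval γ gpoly
        * Polynomial.eval γ (H.map (HahnSeries.ofPowerSeries ℚ ℂ)) = 0 := by
      rw [← Polynomial.eval_mul, ← hGmap, ← Polynomial.map_mul, ← hH]
      exact hroot
    obtain ⟨c, hcunit, hcH⟩ := Polynomial.isUnit_iff.mp hHunit
    have hHne : Polynomial.eval γ (H.map (HahnSeries.ofPowerSeries ℚ ℂ)) ≠ 0 := by
      rw [← hcH, Polynomial.map_C, Polynomial.eval_C]
      intro h0
      refine hcunit.ne_zero ?_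
      apply HahnSeries.ofPowerSeries_injective (Γ := ℚ)
      rw [h0, map_zero]
    have hprod := (mul_eq_zero.mp heval).resolve_right hHne
    rw [hgdef, Polynomial.eval_prod] at hprod
    obtain ⟨δ, hδ, hδ0⟩ := Finset.prod_eq_zero_iff.mp hprod
    rw [Polynomial.eval_sub, Polynomial.eval_X, Polynomial.eval_C, sub_eq_zero] at hδ0
    rwa [hδ0]
  obtain ⟨-, m, hm⟩ := Finset.mem_filter.mp hγOrb
  have hδZk : PuiseuxAux.scale m δ₀ ∈ Zk := hscaleZk m δ₀ hp₀mem.2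
  have hδeq : (PuiseuxAux.scale m δ₀ - γ).orderTop = (q : WithTop ℚ) := by
    rw [← hm]
    have h1 : PuiseuxAux.scale m δ₀ - PuiseuxAux.scale m γ₀ = PuiseuxAux.scale m (δ₀ - γ₀) :=
      (map_sub (PuiseuxAux.scaleHom m) _ _).symm
    rw [h1, PuiseuxAux.scale_orderTop]
    have h2 : δ₀ - γ₀ = -(γ₀ - δ₀) := by ring
    rw [h2, HahnSeries.orderTop_neg]
    exact hq0
  refine ⟨PuiseuxAux.scale m δ₀, ⟨hδZk, le_of_eq hδeq.symm⟩, ?_⟩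
  rintro δ' ⟨hδ'Zk, hδ'ge⟩
  by_contra hne
  obtain ⟨i, hi1, hik, hieq⟩ := hZkpair δ' hδ'Zk (PuiseuxAux.scale m δ₀) hδZk hne
  have hmin : (q : WithTop ℚ) ≤ (δ' - PuiseuxAux.scale m δ₀).orderTop := by
    have hsub : δ' - PuiseuxAux.scale m δ₀ = (δ' - γ) - (PuiseuxAux.scale m δ₀ - γ) := by ring
    rw [hsub]
    exact le_trans (le_min hδ'ge (le_of_eq hδeq.symm)) HahnSeries.min_orderTop_le_orderTop_sub
  rw [hieq] at hmin
  have hqle : q ≤ (b i : ℚ) / (b 0 : ℚ) := by exact_mod_cast hmin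
  have hchain : ∀ d jj, jj + d = k → b jj < b (k + 1) := by
    intro d
    induction d with
    | zero =>
      intro jj hjj
      have hjk : jj = k := by omega
      rw [hjk]
      exact hbmono k hk
    | succ d ih =>
      intro jj hjj
      have h1 : b jj < b (jj + 1) := hbmono jj (by omega)
      exact h1.trans (ih (jj + 1) (by omega))
  have hblt : b i < b (k + 1) := hchain (k - i) i (by omega)
  have hb0pos : (0 : ℚ) < (b 0 : ℚ) := by
    rw [hb0]
    exact_mod_cast hn
  have hlt : (b i : ℚ) / (b 0 : ℚ) < q := by
    rw [hqdef]
    have hblt' : (b i : ℚ) < (b (k+1) : ℚ) := by exact_mod_cast hblt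
    exact div_lt_div_of_pos_right hblt' hb0pos
  linarith


end
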